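/- Assume that for every complex eigenvalue λ of W the matrix E_λ = e^{Ah} + λ·𝓗(h) is invertible. If the networked sampled-data system (Φ_s, Ψ_s) is controllable, then the pair (W, Δ) satisfies the PBH condition and, for every complex eigenvalue λ of W, the pair (E_λ, 𝓑(h)) satisfies the PBH condition. -/

import Mathlib

open Matrix
open scoped Kronecker

/-- Entrywise complexification of a real matrix. -/
noncomputable def cpx {a b : Type*} (M : Matrix a b ℝ) : Matrix a b ℂ :=
  M.map (Complex.ofReal)

/-- The matrix exponential `e^{M}`. -/
noncomputable def mexp {q : Type*} [Fintype q] [DecidableEq q]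
    (M : Matrix q q ℝ) : Matrix q q ℝ :=
  NormedSpace.exp M

/-- The entrywise integral `∫₀ʰ e^{Aτ} dτ`. -/
noncomputable def intExp {q : Type*} [Fintype q] [DecidableEq q]
    (A : Matrix q q ℝ) (h : ℝ) : Matrix q q ℝ :=
  Matrix.of fun i j => ∫ τ in (0:ℝ)..h, (NormedSpace.exp (τ • A)) i j

/-- `θ` is an eigenvalue of the complex square matrix `M`. -/
def IsEig {q : Type*} [Fintype q] [DecidableEq q] (M : Matrix q q ℂ) (θ : ℂ) : Prop :=
  (θ • (1 : Matrix q q ℂ) - M).det = 0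

/-- PBH condition for a pair of complex matrices: for every `s ∈ ℂ`, the only row
vector `v` with `v (sI - M) = 0` and `v G = 0` is `v = 0`. -/
def PBH {q r : Type*} [Fintype q] [DecidableEq q] [Fintype r]
    (M : Matrix q q ℂ) (G : Matrix q r ℂ) : Prop :=
  ∀ (s : ℂ) (v : q → ℂ), v ᵥ* (s • (1 : Matrix q q ℂ) - M) = 0 → v ᵥ* G = 0 → v = 0

/-- Controllability of a discrete-time linear system `x⁺ = F x + G u`:
every state can be steered to the origin in finitely many steps. -/
def Controllable {q r : Type*} [Fintype q] [DecidableEq q] [Fintype r]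
    (F : Matrix q q ℝ) (G : Matrix q r ℝ) : Prop :=
  ∀ x : q → ℝ, ∃ (k : ℕ) (u : Fin k → r → ℝ),
    (F ^ k) *ᵥ x + ∑ j : Fin k, (F ^ (k - 1 - (j : ℕ))) *ᵥ (G *ᵥ u j) = 0

/-- `𝓑(h) = (∫₀ʰ e^{Aτ} dτ)·B`. -/
noncomputable def sampB {n p : ℕ} (A : Matrix (Fin n) (Fin n) ℝ)
    (B : Matrix (Fin n) (Fin p) ℝ) (h : ℝ) : Matrix (Fin n) (Fin p) ℝ :=
  intExp A h * B

/-- `𝓗(h) = (∫₀ʰ e^{Aτ} dτ)·H·C`. -/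
noncomputable def sampH {n m : ℕ} (A : Matrix (Fin n) (Fin n) ℝ)
    (H : Matrix (Fin n) (Fin m) ℝ) (C : Matrix (Fin m) (Fin n) ℝ) (h : ℝ) :
    Matrix (Fin n) (Fin n) ℝ :=
  intExp A h * H * C

/-- `Φ_s = I_N ⊗ e^{Ah} + W ⊗ 𝓗(h)`. -/
noncomputable def Phis {n m N : ℕ} (A : Matrix (Fin n) (Fin n) ℝ)
    (H : Matrix (Fin n) (Fin m) ℝ) (C : Matrix (Fin m) (Fin n) ℝ)
    (W : Matrix (Fin N) (Fin N) ℝ) (h : ℝ) :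
    Matrix (Fin N × Fin n) (Fin N × Fin n) ℝ :=
  (1 : Matrix (Fin N) (Fin N) ℝ) ⊗ₖ mexp (h • A) + W ⊗ₖ sampH A H C h

/-- `E_λ = e^{Ah} + λ·𝓗(h)` (complexified). -/
noncomputable def Emat {n m : ℕ} (A : Matrix (Fin n) (Fin n) ℝ)
    (H : Matrix (Fin n) (Fin m) ℝ) (C : Matrix (Fin m) (Fin n) ℝ)
    (h : ℝ) (lam : ℂ) : Matrix (Fin n) (Fin n) ℂ :=
  cpx (mexp (h • A)) + lam • cpx (sampH A H C h)

/-! ### Auxiliary lemmas -/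

noncomputable def cvec {q : Type*} (x : q → ℝ) : q → ℂ := fun i => (x i : ℂ)

lemma cpx_mul {a b c : Type*} [Fintype b] (M : Matrix a b ℝ) (K : Matrix b c ℝ) :
    cpx (M * K) = cpx M * cpx K := by
  ext i j
  simp [cpx, Matrix.mul_apply]

lemma cpx_one {a : Type*} [Fintype a] [DecidableEq a] :
    cpx (1 : Matrix a a ℝ) = 1 := by
  ext i j
  by_cases hij : i = j <;> simp [cpx, Matrix.one_apply, hij]

lemma cpx_pow {a : Type*} [Fintype a] [DecidableEq a] (M : Matrix a a ℝ) (k : ℕ) :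
    cpx (M ^ k) = (cpx M) ^ k := by
  induction k with
  | zero => simpa using cpx_one
  | succ k ih => rw [pow_succ, cpx_mul, ih, pow_succ]

lemma dot_sum {q : Type*} [Fintype q] {k : ℕ} (z : q → ℂ) (f : Fin k → q → ℂ) :
    z ⬝ᵥ (∑ j, f j) = ∑ j, z ⬝ᵥ f j := by
  simp only [dotProduct, Finset.sum_apply, Finset.mul_sum]
  exact Finset.sum_comm

lemma cpx_add {a b : Type*} (M K : Matrix a b ℝ) : cpx (M + K) = cpx M + cpx K := by
  ext i j; simp [cpx]

lemma cpx_kron {a b c d : Type*} (M : Matrix a b ℝ) (K : Matrix c d ℝ) :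
    cpx (M ⊗ₖ K) = cpx M ⊗ₖ cpx K := by
  ext i j; simp [cpx, Matrix.kroneckerMap_apply]

lemma cpx_mulVec {a b : Type*} [Fintype b] (M : Matrix a b ℝ) (x : b → ℝ) :
    cpx M *ᵥ cvec x = cvec (M *ᵥ x) := by
  funext i
  simp [cpx, cvec, Matrix.mulVec, dotProduct]

lemma vecMul_kron {N n N' n' : Type*} [Fintype N] [Fintype n]
    (v : N → ℂ) (w : n → ℂ) (M : Matrix N N' ℂ) (K : Matrix n n' ℂ) :
    (fun i : N × n => v i.1 * w i.2) ᵥ* (M ⊗ₖ K) =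
      fun i : N' × n' => (v ᵥ* M) i.1 * (w ᵥ* K) i.2 := by
  funext i
  simp only [Matrix.vecMul, dotProduct, Matrix.kroneckerMap_apply,
    Fintype.sum_prod_type, Finset.sum_mul, Finset.mul_sum]
  rw [Finset.sum_comm]
  refine Finset.sum_congr rfl fun a _ => Finset.sum_congr rfl fun b _ => by ring

lemma vecMul_smul_mat {a b : Type*} [Fintype a] (v : a → ℂ) (s : ℂ) (M : Matrix a b ℂ) :
    v ᵥ* (s • M) = s • (v ᵥ* M) := by
  funext j
  simp [Matrix.vecMul, dotProduct, Finset.mul_sum, mul_left_comm]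

lemma vecMul_shift {q : Type*} [Fintype q] [DecidableEq q] {M : Matrix q q ℂ} {s : ℂ}
    {v : q → ℂ} :
    v ᵥ* (s • (1 : Matrix q q ℂ) - M) = 0 ↔ v ᵥ* M = s • v := by
  rw [Matrix.vecMul_sub, vecMul_smul_mat, Matrix.vecMul_one, sub_eq_zero, eq_comm]

/-- Main consequence of controllability: a nonzero-eigenvalue left eigenvector of `F`
orthogonal to the columns of `G` must vanish. -/
lemma key {q r : Type*} [Fintype q] [DecidableEq q] [Fintype r]
    (F : Matrix q q ℝ) (G : Matrix q r ℝ) (hc : Controllable F G)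
    (z : q → ℂ) (μ : ℂ) (hμ : μ ≠ 0)
    (hzF : z ᵥ* cpx F = μ • z) (hzG : z ᵥ* cpx G = 0) : z = 0 := by
  have hpow : ∀ k : ℕ, z ᵥ* cpx (F ^ k) = μ ^ k • z := by
    intro k
    induction k with
    | zero => simp [cpx_one]
    | succ k ih =>
      rw [pow_succ, cpx_mul, ← Matrix.vecMul_vecMul, ih, Matrix.smul_vecMul, hzF,
        smul_smul, pow_succ]
  have hdot : ∀ x : q → ℝ, z ⬝ᵥ cvec x = 0 := by
    intro x
    obtain ⟨k, u, hku⟩ := hc x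
    have h0 : z ⬝ᵥ cvec ((F ^ k) *ᵥ x + ∑ j : Fin k, (F ^ (k - 1 - (j : ℕ))) *ᵥ (G *ᵥ u j)) = 0 := by
      rw [hku]; simp [cvec, dotProduct]
    have hlin : cvec ((F ^ k) *ᵥ x + ∑ j : Fin k, (F ^ (k - 1 - (j : ℕ))) *ᵥ (G *ᵥ u j)) =
        cvec ((F ^ k) *ᵥ x) + ∑ j : Fin k, cvec ((F ^ (k - 1 - (j : ℕ))) *ᵥ (G *ᵥ u j)) := by
      funext i
      simp [cvec, Finset.sum_apply]
    rw [hlin, dotProduct_add, dot_sum] at h0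
    have hterm : ∀ (e : ℕ) (y : r → ℝ), z ⬝ᵥ cvec ((F ^ e) *ᵥ (G *ᵥ y)) = 0 := by
      intro e y
      rw [← cpx_mulVec, Matrix.dotProduct_mulVec, hpow, smul_dotProduct,
        ← cpx_mulVec, Matrix.dotProduct_mulVec, hzG]
      simp
    have hmain : z ⬝ᵥ cvec ((F ^ k) *ᵥ x) = μ ^ k * (z ⬝ᵥ cvec x) := by
      rw [← cpx_mulVec, Matrix.dotProduct_mulVec, hpow, smul_dotProduct, smul_eq_mul]
    rw [hmain] at h0
    simp only [hterm, Finset.sum_const_zero, add_zero] at h0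
    exact (mul_eq_zero.mp h0).resolve_left (pow_ne_zero _ hμ)
  funext i
  have hs := hdot (Pi.single i 1)
  have hsingle : cvec (Pi.single i (1:ℝ)) = Pi.single i (1:ℂ) := by
    funext j
    by_cases hj : j = i <;> simp [cvec, Pi.single_apply, hj]
  rw [hsingle] at hs
  simpa using hs

lemma exists_left_eig {q : ℕ} (hq : 0 < q) (M : Matrix (Fin q) (Fin q) ℂ) :
    ∃ (μ : ℂ) (w : Fin q → ℂ), w ≠ 0 ∧ w ᵥ* M = μ • w := by
  haveI : Nonempty (Fin q) := Fin.pos_iff_nonempty.mp hq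
  obtain ⟨μ, hμ⟩ := Module.End.exists_eigenvalue (Matrix.toLin' Mᵀ)
  obtain ⟨w, hw⟩ := hμ.exists_hasEigenvector
  refine ⟨μ, w, hw.2, ?_⟩
  rw [← Matrix.mulVec_transpose, ← Matrix.toLin'_apply]
  exact hw.apply_eq_smul

lemma eig_ne_zero {q : Type*} [Fintype q] [DecidableEq q]
    {E : Matrix q q ℂ} (hE : IsUnit E) {w : q → ℂ} (hw : w ≠ 0) {μ : ℂ}
    (h : w ᵥ* E = μ • w) : μ ≠ 0 := by
  intro hμ0
  apply hw
  have hdet : IsUnit E.det := (Matrix.isUnit_iff_isUnit_det E).mp hE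
  have hinv : E * E⁻¹ = 1 := Matrix.mul_nonsing_inv E hdet
  have : w ᵥ* (E * E⁻¹) = 0 := by
    rw [← Matrix.vecMul_vecMul, h, hμ0, zero_smul, Matrix.zero_vecMul]
  rwa [hinv, Matrix.vecMul_one] at this

/-- The Kronecker eigenvector bridge. -/
lemma bridge {n m p N : ℕ}
    (h : ℝ) (A : Matrix (Fin n) (Fin n) ℝ) (B : Matrix (Fin n) (Fin p) ℝ)
    (C : Matrix (Fin m) (Fin n) ℝ) (H : Matrix (Fin n) (Fin m) ℝ)
    (W : Matrix (Fin N) (Fin N) ℝ) (δ : Fin N → ℝ)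
    (hc : Controllable (Phis A H C W h) (Matrix.diagonal δ ⊗ₖ sampB A B h))
    (v : Fin N → ℂ) (w : Fin n → ℂ) (lam μ : ℂ) (hμ : μ ≠ 0)
    (hv : v ᵥ* cpx W = lam • v) (hw : w ᵥ* Emat A H C h lam = μ • w)
    (hzero : ∀ i : Fin N × Fin p,
      (v ᵥ* cpx (Matrix.diagonal δ)) i.1 * (w ᵥ* cpx (sampB A B h)) i.2 = 0) :
    (fun i : Fin N × Fin n => v i.1 * w i.2) = 0 := by
  set z : Fin N × Fin n → ℂ := fun i => v i.1 * w i.2 with hz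
  have hsplit : w ᵥ* cpx (mexp (h • A)) + lam • (w ᵥ* cpx (sampH A H C h)) = μ • w := by
    rw [← hw, Emat, Matrix.vecMul_add, vecMul_smul_mat]
  have hΦ : cpx (Phis A H C W h) =
      (1 : Matrix (Fin N) (Fin N) ℂ) ⊗ₖ cpx (mexp (h • A)) +
        cpx W ⊗ₖ cpx (sampH A H C h) := by
    rw [Phis, cpx_add, cpx_kron, cpx_kron, cpx_one]
  have hzF : z ᵥ* cpx (Phis A H C W h) = μ • z := by
    rw [hΦ, Matrix.vecMul_add, hz, vecMul_kron, vecMul_kron, hv]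
    funext i
    have hE := congrFun hsplit i.2
    simp only [Pi.add_apply, Pi.smul_apply, smul_eq_mul] at hE
    simp only [Pi.add_apply, Pi.smul_apply, Matrix.vecMul_one, smul_eq_mul]
    calc v i.1 * (w ᵥ* cpx (mexp (h • A))) i.2 + lam * v i.1 * (w ᵥ* cpx (sampH A H C h)) i.2
        = v i.1 * ((w ᵥ* cpx (mexp (h • A))) i.2 + lam * (w ᵥ* cpx (sampH A H C h)) i.2) := by
          ring
      _ = v i.1 * (μ * w i.2) := by rw [hE]
      _ = μ * (v i.1 * w i.2) := by ring
  have hzG : z ᵥ* cpx (Matrix.diagonal δ ⊗ₖ sampB A B h) = 0 := by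
    rw [cpx_kron, hz, vecMul_kron]
    funext i
    exact hzero i
  exact key _ _ hc z μ hμ hzF hzG

lemma kron_vec_ne_zero {N n : ℕ} {v : Fin N → ℂ} {w : Fin n → ℂ}
    (hv : v ≠ 0) (hw : w ≠ 0) :
    (fun i : Fin N × Fin n => v i.1 * w i.2) ≠ 0 := by
  obtain ⟨i, hi⟩ := Function.ne_iff.mp hv
  obtain ⟨j, hj⟩ := Function.ne_iff.mp hw
  intro hzz
  have := congrFun hzz (i, j)
  simp only [Pi.zero_apply] at this hi hj
  exact (mul_ne_zero hi hj) this

theorem stmt6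
    (n m p N : ℕ) (hn : 0 < n) (hm : 0 < m) (hp : 0 < p) (hN : 0 < N)
    (h : ℝ) (hh : 0 < h)
    (A : Matrix (Fin n) (Fin n) ℝ) (B : Matrix (Fin n) (Fin p) ℝ)
    (C : Matrix (Fin m) (Fin n) ℝ) (H : Matrix (Fin n) (Fin m) ℝ)
    (W : Matrix (Fin N) (Fin N) ℝ)
    (δ : Fin N → ℝ) (hδ : ∀ i, δ i = 0 ∨ δ i = 1)
    (hE : ∀ lam : ℂ, IsEig (cpx W) lam → IsUnit (Emat A H C h lam))
    (hc : Controllable (Phis A H C W h) (Matrix.diagonal δ ⊗ₖ sampB A B h)) :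
    PBH (cpx W) (cpx (Matrix.diagonal δ)) ∧
      ∀ lam : ℂ, IsEig (cpx W) lam → PBH (Emat A H C h lam) (cpx (sampB A B h)) := by
  constructor
  · -- PBH for (W, Δ)
    intro s v hv1 hv2
    by_contra hv0
    have hvW : v ᵥ* cpx W = s • v := vecMul_shift.mp hv1
    have heig : IsEig (cpx W) s := Matrix.exists_vecMul_eq_zero_iff.mp ⟨v, hv0, hv1⟩
    have hEs := hE s heig
    obtain ⟨μ, w, hw0, hwE⟩ := exists_left_eig hn (Emat A H C h s)
    have hμ0 : μ ≠ 0 := eig_ne_zero hEs hw0 hwE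
    have hz := bridge h A B C H W δ hc v w s μ hμ0 hvW hwE
      (fun i => by rw [hv2]; simp)
    exact kron_vec_ne_zero hv0 hw0 hz
  · -- PBH for (E_λ, 𝓑)
    intro lam hlam s w hw1 hw2
    by_contra hw0
    have hwE : w ᵥ* Emat A H C h lam = s • w := vecMul_shift.mp hw1
    have hs0 : s ≠ 0 := eig_ne_zero (hE lam hlam) hw0 hwE
    obtain ⟨v, hv0, hv⟩ := Matrix.exists_vecMul_eq_zero_iff.mpr hlam
    have hvW : v ᵥ* cpx W = lam • v := vecMul_shift.mp hv
    have hz := bridge h A B C H W δ hc v w lam s hs0 hvW hwE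
      (fun i => by rw [hw2]; simp)
    exact kron_vec_ne_zero hv0 hw0 hz
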